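/- arXiv:2305.09102 — 2 statements merged into one kernel-verified Lean document; each statement's English description precedes it below -/
import Mathlib

section
/- (Main theorem, core step) In the sequential extended Wigner's friend scenario, any behaviour satisfying the Local Friendliness constraints is local deterministic: if p(ã, b | x̃, y) satisfies (i) AOE: there exists a joint distribution p(ã, b, c | x̃, y) with p(ã | b, c, x̃=i, y) = δ_{ã, c_i} for 1 ≤ i ≤ R, and (ii) Local agency: p(b, c₁,…,c_j | x̃, y) is independent of those components of x̃ beyond index j, and p(ã, c | x̃, y) = p(ã, c | x̃), then p(ã,b|x̃,y) can be written as p(ã,b|x̃=i,y) = ∑_c δ_{ã,c_i} · p̂(b | c₁,…,c_i, y) · p̂(c) for i ≤ R, where p̂(c) = p(c | x̃ = R+1) and p̂(b | c₁,…,c_i, y) = p(b | c₁,…,c_i, x̃=R+1, y); consequently the Alice marginal p(ã | x̃=i, y) is a mixture over c of deterministic responses δ_{ã,c_i}, and the full behaviour lies in the convex hull of behaviours that are deterministic on all Alice inputs i ≤ R. -/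
open Finset

lemma lf_part1 {A B Y : Type}
    [Fintype A] [DecidableEq A] [Fintype B] {R : ℕ}
    (P : A → B → (Fin R → A) → Fin (R + 1) → Y → ℝ)
    (hpos : ∀ a b c x y, 0 ≤ P a b c x y)
    (hnorm : ∀ x y, ∑ a, ∑ b, ∑ c, P a b c x y = 1)
    (hAOE : ∀ (a : A) (b : B) (c : Fin R → A) (i : Fin R) (y : Y),
      a ≠ c i → P a b c i.castSucc y = 0)
    (hLA1 : ∀ (i : Fin R) (x x' : Fin (R + 1)), i.castSucc ≤ x → i.castSucc ≤ x' →
      ∀ (b : B) (y : Y) (g : Fin R → A),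
        (∑ a, ∑ c ∈ Finset.univ.filter (fun c : Fin R → A => ∀ j ≤ i, c j = g j),
          P a b c x y)
        = ∑ a, ∑ c ∈ Finset.univ.filter (fun c : Fin R → A => ∀ j ≤ i, c j = g j),
            P a b c x' y)
    (i : Fin R) (a : A) (b : B) (y : Y) :
    (∑ c, P a b c i.castSucc y)
      = ∑ c : Fin R → A, (if a = c i then 1 else 0)
          * ((∑ a', ∑ c' ∈ Finset.univ.filter
                (fun c' : Fin R → A => ∀ j ≤ i, c' j = c j),
                P a' b c' (Fin.last R) y)
              / (∑ b', ∑ a', ∑ c' ∈ Finset.univ.filter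
                  (fun c' : Fin R → A => ∀ j ≤ i, c' j = c j),
                  P a' b' c' (Fin.last R) y))
          * (∑ a', ∑ b', P a' b' c (Fin.last R) y) := by
  have hAne : Nonempty A := by
    by_contra h
    have : IsEmpty A := not_nonempty_iff.mp h
    have h1 := hnorm (Fin.last R) y
    simp at h1
  obtain ⟨a₀⟩ := hAne
  set fib : (Fin R → A) → Finset (Fin R → A) :=
    fun g => Finset.univ.filter (fun c' => ∀ j ≤ i, c' j = g j) with hfibd
  set F : B → (Fin R → A) → ℝ :=
    fun b' g => ∑ a', ∑ c' ∈ fib g, P a' b' c' (Fin.last R) y with hFd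
  set D : (Fin R → A) → ℝ := fun g => ∑ b', F b' g with hDd
  set M : (Fin R → A) → ℝ :=
    fun g => ∑ a', ∑ b', P a' b' g (Fin.last R) y with hMd
  have hmemfib : ∀ (c g : Fin R → A), c ∈ fib g ↔ ∀ j ≤ i, c j = g j := by
    intro c g; simp [hfibd]
  have hFnn : ∀ b' g, 0 ≤ F b' g := fun b' g =>
    Finset.sum_nonneg fun _ _ => Finset.sum_nonneg fun _ _ => hpos _ _ _ _ _
  have hFD : ∀ b' g, F b' g ≤ D g := fun b' g =>
    Finset.single_le_sum (fun b'' _ => hFnn b'' g) (Finset.mem_univ b')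
  have hfibeq : ∀ c g, c ∈ fib g → fib c = fib g := by
    intro c g hc
    rw [hmemfib] at hc
    ext x
    rw [hmemfib, hmemfib]
    constructor <;> intro h j hj
    · rw [h j hj, hc j hj]
    · rw [h j hj, ← hc j hj]
  have hDfib : ∀ g, ∑ c ∈ fib g, M c = D g := by
    intro g
    calc ∑ c ∈ fib g, M c
        = ∑ c ∈ fib g, ∑ a', ∑ b', P a' b' c (Fin.last R) y := rfl
      _ = ∑ a', ∑ c ∈ fib g, ∑ b', P a' b' c (Fin.last R) y := Finset.sum_comm
      _ = ∑ a', ∑ b', ∑ c ∈ fib g, P a' b' c (Fin.last R) y :=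
          Finset.sum_congr rfl (fun _ _ => Finset.sum_comm)
      _ = ∑ b', ∑ a', ∑ c ∈ fib g, P a' b' c (Fin.last R) y := Finset.sum_comm
      _ = D g := rfl
  set f : (Fin R → A) → (Fin R → A) := fun c j => if j ≤ i then c j else a₀ with hfd
  have hff : ∀ c, f (f c) = f c := by
    intro c; funext j; simp only [hfd]
    by_cases hj : j ≤ i <;> simp [hj]
  have hfib_f : ∀ g, f g = g →
      Finset.univ.filter (fun c => f c = g) = fib g := by
    intro g hg
    ext c
    rw [Finset.mem_filter, hmemfib]
    simp only [Finset.mem_univ, true_and]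
    constructor
    · intro h j hj; rw [← h]; simp [hfd, hj]
    · intro h; funext j
      by_cases hj : j ≤ i
      · simp [hfd, hj, h j hj]
      · have hgj := congrFun hg j
        simp only [hfd] at hgj ⊢
        simp only [if_neg hj] at hgj ⊢
        exact hgj
  have hK4 : ∀ g, ∑ c ∈ fib g, P a b c i.castSucc y
      = (if a = g i then 1 else 0) * (∑ a', ∑ c' ∈ fib g, P a' b c' i.castSucc y) := by
    intro g
    by_cases ha : a = g i
    · rw [if_pos ha, one_mul, Finset.sum_comm]
      refine Finset.sum_congr rfl fun c hc => ?_
      have hci : c i = g i := (hmemfib c g).mp hc i le_rfl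
      symm
      apply Finset.sum_eq_single a
      · intro a' _ hne
        apply hAOE a' b c i y
        rw [hci, ← ha]; exact hne
      · intro h; exact absurd (Finset.mem_univ a) h
    · rw [if_neg ha, zero_mul]
      apply Finset.sum_eq_zero
      intro c hc
      apply hAOE a b c i y
      have hci : c i = g i := (hmemfib c g).mp hc i le_rfl
      rw [hci]; exact ha
  have hK3 : ∀ g, (∑ a', ∑ c' ∈ fib g, P a' b c' i.castSucc y) = F b g := by
    intro g
    exact hLA1 i i.castSucc (Fin.last R) le_rfl (Fin.le_last _) b y g
  show (∑ c, P a b c i.castSucc y)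
      = ∑ c : Fin R → A, (if a = c i then 1 else 0) * (F b c / D c) * M c
  calc ∑ c, P a b c i.castSucc y
      = ∑ g : Fin R → A, ∑ c ∈ Finset.univ.filter (fun c => f c = g),
          P a b c i.castSucc y :=
        (Finset.sum_fiberwise_of_maps_to (fun c _ => Finset.mem_univ (f c)) _).symm
    _ = ∑ g : Fin R → A, ∑ c ∈ Finset.univ.filter (fun c => f c = g),
          ((if a = c i then 1 else 0) * (F b c / D c) * M c) := by
        refine Finset.sum_congr rfl fun g _ => ?_
        by_cases hg : f g = g
        · rw [hfib_f g hg]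
          have hR : ∑ c ∈ fib g, (if a = c i then 1 else 0) * (F b c / D c) * M c
              = (if a = g i then 1 else 0) * (F b g / D g) * D g := by
            calc ∑ c ∈ fib g, (if a = c i then 1 else 0) * (F b c / D c) * M c
                = ∑ c ∈ fib g, (if a = g i then 1 else 0) * (F b g / D g) * M c := by
                  refine Finset.sum_congr rfl fun c hc => ?_
                  have h1 : c i = g i := (hmemfib c g).mp hc i le_rfl
                  have h2 : fib c = fib g := hfibeq c g hc
                  have hF' : F b c = F b g := by
                    simp only [hFd]; rw [h2]
                  have hD' : D c = D g := by
                    simp only [hDd, hFd]; rw [h2]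
                  rw [h1, hF', hD']
              _ = (if a = g i then 1 else 0) * (F b g / D g) * ∑ c ∈ fib g, M c :=
                  (Finset.mul_sum _ _ _).symm
              _ = (if a = g i then 1 else 0) * (F b g / D g) * D g := by rw [hDfib]
          rw [hR, hK4 g, hK3 g]
          by_cases hD : D g = 0
          · have hF0 : F b g = 0 := le_antisymm (hD ▸ hFD b g) (hFnn b g)
            rw [hF0, hD]; ring
          · rw [mul_assoc, div_mul_cancel₀ _ hD]
        · have hempty : Finset.univ.filter (fun c => f c = g) = ∅ := by
            rw [Finset.filter_eq_empty_iff]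
            intro c _ h
            exact hg (h ▸ hff c)
          rw [hempty, Finset.sum_empty, Finset.sum_empty]
    _ = ∑ c, (if a = c i then 1 else 0) * (F b c / D c) * M c :=
        Finset.sum_fiberwise_of_maps_to (fun c _ => Finset.mem_univ (f c)) _

lemma lf_part2 {A B Y : Type}
    [Fintype A] [DecidableEq A] [Fintype B] {R : ℕ}
    (P : A → B → (Fin R → A) → Fin (R + 1) → Y → ℝ)
    (hpos : ∀ a b c x y, 0 ≤ P a b c x y)
    (hnorm : ∀ x y, ∑ a, ∑ b, ∑ c, P a b c x y = 1)
    (hAOE : ∀ (a : A) (b : B) (c : Fin R → A) (i : Fin R) (y : Y),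
      a ≠ c i → P a b c i.castSucc y = 0)
    (hLA1 : ∀ (i : Fin R) (x x' : Fin (R + 1)), i.castSucc ≤ x → i.castSucc ≤ x' →
      ∀ (b : B) (y : Y) (g : Fin R → A),
        (∑ a, ∑ c ∈ Finset.univ.filter (fun c : Fin R → A => ∀ j ≤ i, c j = g j),
          P a b c x y)
        = ∑ a, ∑ c ∈ Finset.univ.filter (fun c : Fin R → A => ∀ j ≤ i, c j = g j),
            P a b c x' y)
    (i : Fin R) (a : A) (y : Y) :
    (∑ b, ∑ c, P a b c i.castSucc y)
      = ∑ c : Fin R → A, (if a = c i then 1 else 0)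
          * (∑ a', ∑ b', P a' b' c (Fin.last R) y) := by
  set fib : (Fin R → A) → Finset (Fin R → A) :=
    fun g => Finset.univ.filter (fun c' => ∀ j ≤ i, c' j = g j) with hfibd
  set F : B → (Fin R → A) → ℝ :=
    fun b' g => ∑ a', ∑ c' ∈ fib g, P a' b' c' (Fin.last R) y with hFd
  set D : (Fin R → A) → ℝ := fun g => ∑ b', F b' g with hDd
  set M : (Fin R → A) → ℝ :=
    fun g => ∑ a', ∑ b', P a' b' g (Fin.last R) y with hMd
  have hmemfib : ∀ (c g : Fin R → A), c ∈ fib g ↔ ∀ j ≤ i, c j = g j := by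
    intro c g; simp [hfibd]
  have hMnn : ∀ g, 0 ≤ M g := fun g =>
    Finset.sum_nonneg fun _ _ => Finset.sum_nonneg fun _ _ => hpos _ _ _ _ _
  have hDfib : ∀ g, ∑ c ∈ fib g, M c = D g := by
    intro g
    calc ∑ c ∈ fib g, M c
        = ∑ c ∈ fib g, ∑ a', ∑ b', P a' b' c (Fin.last R) y := rfl
      _ = ∑ a', ∑ c ∈ fib g, ∑ b', P a' b' c (Fin.last R) y := Finset.sum_comm
      _ = ∑ a', ∑ b', ∑ c ∈ fib g, P a' b' c (Fin.last R) y :=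
          Finset.sum_congr rfl (fun _ _ => Finset.sum_comm)
      _ = ∑ b', ∑ a', ∑ c ∈ fib g, P a' b' c (Fin.last R) y := Finset.sum_comm
      _ = D g := rfl
  have hMD : ∀ g, M g ≤ D g := fun g => by
    rw [← hDfib g]
    exact Finset.single_le_sum (fun c _ => hMnn c)
      ((hmemfib g g).mpr fun j hj => rfl)
  calc ∑ b, ∑ c, P a b c i.castSucc y
      = ∑ b, ∑ c : Fin R → A, (if a = c i then 1 else 0) * (F b c / D c) * M c :=
        Finset.sum_congr rfl fun b _ => lf_part1 P hpos hnorm hAOE hLA1 i a b y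
    _ = ∑ c : Fin R → A, ∑ b, (if a = c i then 1 else 0) * (F b c / D c) * M c :=
        Finset.sum_comm
    _ = ∑ c : Fin R → A, (if a = c i then 1 else 0) * M c := by
        refine Finset.sum_congr rfl fun c _ => ?_
        by_cases hD : D c = 0
        · have hM0 : M c = 0 := le_antisymm (hD ▸ hMD c) (hMnn c)
          rw [hM0]; simp
        · calc ∑ b, (if a = c i then 1 else 0) * (F b c / D c) * M c
              = ∑ b, (if a = c i then 1 else 0) * M c / D c * F b c := by
                refine Finset.sum_congr rfl fun b _ => ?_; ring
            _ = (if a = c i then 1 else 0) * M c / D c * ∑ b, F b c :=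
                (Finset.mul_sum _ _ _).symm
            _ = (if a = c i then 1 else 0) * M c / D c * D c := rfl
            _ = (if a = c i then 1 else 0) * M c := div_mul_cancel₀ _ hD

lemma lf_part3 {A B Y : Type}
    [Fintype A] [DecidableEq A] [Fintype B] {R : ℕ}
    (P : A → B → (Fin R → A) → Fin (R + 1) → Y → ℝ)
    (hpos : ∀ a b c x y, 0 ≤ P a b c x y)
    (hnorm : ∀ x y, ∑ a, ∑ b, ∑ c, P a b c x y = 1)
    (hAOE : ∀ (a : A) (b : B) (c : Fin R → A) (i : Fin R) (y : Y),
      a ≠ c i → P a b c i.castSucc y = 0)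
    (hLA1 : ∀ (i : Fin R) (x x' : Fin (R + 1)), i.castSucc ≤ x → i.castSucc ≤ x' →
      ∀ (b : B) (y : Y) (g : Fin R → A),
        (∑ a, ∑ c ∈ Finset.univ.filter (fun c : Fin R → A => ∀ j ≤ i, c j = g j),
          P a b c x y)
        = ∑ a, ∑ c ∈ Finset.univ.filter (fun c : Fin R → A => ∀ j ≤ i, c j = g j),
            P a b c x' y)
    (hLA2 : ∀ (a : A) (c : Fin R → A) (x : Fin (R + 1)) (y y' : Y),
      ∑ b, P a b c x y = ∑ b, P a b c x y') :
    ((fun a b x y => ∑ c, P a b c x y)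
      ∈ convexHull ℝ {q : A → B → Fin (R + 1) → Y → ℝ |
          ∀ (i : Fin R) (a : A) (y : Y),
            (∑ b, q a b i.castSucc y) = 0 ∨ (∑ b, q a b i.castSucc y) = 1}) := by
  rcases isEmpty_or_nonempty Y with hY | hY
  · exact subset_convexHull ℝ _ (fun i a y => (hY.false y).elim)
  obtain ⟨y₀⟩ := hY
  set w : (Fin R → A) → ℝ :=
    fun c => ∑ a', ∑ b', P a' b' c (Fin.last R) y₀ with hwd
  set q : (Fin R → A) → A → B → Fin (R + 1) → Y → ℝ := fun c a b x y =>
    if hx : x = Fin.last R then P a b c x y / w c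
    else (if a = c (x.castPred hx) then 1 else 0) *
      ((∑ a', ∑ c' ∈ Finset.univ.filter
          (fun c' : Fin R → A => ∀ j ≤ x.castPred hx, c' j = c j),
          P a' b c' (Fin.last R) y)
        / (∑ b', ∑ a', ∑ c' ∈ Finset.univ.filter
            (fun c' : Fin R → A => ∀ j ≤ x.castPred hx, c' j = c j),
            P a' b' c' (Fin.last R) y)) with hqd
  have hw0 : ∀ c, 0 ≤ w c := fun c =>
    Finset.sum_nonneg fun _ _ => Finset.sum_nonneg fun _ _ => hpos _ _ _ _ _
  have hw1 : ∑ c : Fin R → A, w c = 1 := by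
    calc ∑ c : Fin R → A, w c
        = ∑ c : Fin R → A, ∑ a', ∑ b', P a' b' c (Fin.last R) y₀ := rfl
      _ = ∑ a', ∑ c : Fin R → A, ∑ b', P a' b' c (Fin.last R) y₀ := Finset.sum_comm
      _ = ∑ a', ∑ b', ∑ c : Fin R → A, P a' b' c (Fin.last R) y₀ :=
          Finset.sum_congr rfl fun _ _ => Finset.sum_comm
      _ = 1 := hnorm (Fin.last R) y₀
  have hqmem : ∀ c (i : Fin R) (a : A) (y : Y),
      (∑ b, q c a b i.castSucc y) = 0 ∨ (∑ b, q c a b i.castSucc y) = 1 := by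
    intro c i a y
    have hne : (i.castSucc : Fin (R + 1)) ≠ Fin.last R := (Fin.castSucc_lt_last i).ne
    have hq' : ∀ b, q c a b i.castSucc y = (if a = c i then 1 else 0) *
        ((∑ a', ∑ c' ∈ Finset.univ.filter
            (fun c' : Fin R → A => ∀ j ≤ i, c' j = c j),
            P a' b c' (Fin.last R) y)
          / (∑ b', ∑ a', ∑ c' ∈ Finset.univ.filter
              (fun c' : Fin R → A => ∀ j ≤ i, c' j = c j),
              P a' b' c' (Fin.last R) y)) := by
      intro b
      simp only [hqd]
      rw [dif_neg hne]
      simp only [Fin.castPred_castSucc]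
      rfl
    set Fc : B → ℝ := fun b => ∑ a', ∑ c' ∈ Finset.univ.filter
        (fun c' : Fin R → A => ∀ j ≤ i, c' j = c j),
        P a' b c' (Fin.last R) y with hFcd
    have hsum : ∑ b, q c a b i.castSucc y
        = (if a = c i then 1 else 0) * ((∑ b, Fc b) / (∑ b', Fc b')) := by
      calc ∑ b, q c a b i.castSucc y
          = ∑ b, (if a = c i then 1 else 0) * (Fc b / (∑ b', Fc b')) :=
            Finset.sum_congr rfl fun b _ => hq' b
        _ = (if a = c i then 1 else 0) * ∑ b, Fc b / (∑ b', Fc b') :=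
            (Finset.mul_sum _ _ _).symm
        _ = (if a = c i then 1 else 0) * ((∑ b, Fc b) / (∑ b', Fc b')) := by
            rw [← Finset.sum_div]
    rw [hsum]
    by_cases hD : (∑ b', Fc b') = 0
    · left; rw [hD]; simp
    · rw [div_self hD]
      by_cases ha : a = c i
      · right; rw [if_pos ha, mul_one]
      · left; rw [if_neg ha, zero_mul]
  have hmain : (fun a b x y => ∑ c, P a b c x y)
      = Finset.univ.centerMass w q := by
    rw [Finset.univ.centerMass_eq_of_sum_1 q hw1]
    funext a b x y
    simp only [Finset.sum_apply, Pi.smul_apply, smul_eq_mul]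
    by_cases hx : x = Fin.last R
    · subst hx
      symm
      refine Finset.sum_congr rfl fun c _ => ?_
      simp only [hqd]
      rw [dif_pos trivial]
      by_cases hwc : w c = 0
      · have hy0 : ∑ b', P a b' c (Fin.last R) y₀ = 0 :=
          (Finset.sum_eq_zero_iff_of_nonneg
            (fun a' _ => Finset.sum_nonneg fun b' _ => hpos _ _ _ _ _)).mp
            hwc a (Finset.mem_univ a)
        have hy : ∑ b', P a b' c (Fin.last R) y = 0 := by
          rw [hLA2 a c (Fin.last R) y y₀]; exact hy0
        have hP0 : P a b c (Fin.last R) y = 0 :=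
          (Finset.sum_eq_zero_iff_of_nonneg
            (fun b' _ => hpos _ _ _ _ _)).mp hy b (Finset.mem_univ b)
        rw [hwc, hP0]; simp
      · rw [mul_comm, div_mul_cancel₀ _ hwc]
    · have hx' : x = (x.castPred hx).castSucc := (Fin.castSucc_castPred x hx).symm
      set i := x.castPred hx with hid
      have hne : (i.castSucc : Fin (R + 1)) ≠ Fin.last R := (Fin.castSucc_lt_last i).ne
      rw [hx']
      rw [lf_part1 P hpos hnorm hAOE hLA1 i a b y]
      refine Finset.sum_congr rfl fun c _ => ?_
      have hwM : w c = ∑ a', ∑ b', P a' b' c (Fin.last R) y :=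
        Finset.sum_congr rfl fun a' _ => hLA2 a' c (Fin.last R) y₀ y
      simp only [hqd]
      rw [dif_neg hne]
      rw [Fin.castPred_castSucc]
      rw [hwM]
      ring
  rw [hmain]
  exact Finset.centerMass_mem_convexHull _ (fun c _ => hw0 c)
    (by rw [hw1]; exact one_pos) (fun c _ => hqmem c)

/-- main theorem, core step: in the sequential extended
Wigner's friend scenario, any behaviour satisfying the Local Friendliness
constraints admits the decomposition
`p(ã,b|x̃=i,y) = ∑_c δ_{ã,c_i} · p̂(b|c₁…c_i,y) · p̂(c)` for `i ≤ R`, where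
`p̂(c) = p(c|x̃=R+1)` and `p̂(b|c₁…c_i,y) = p(b|c₁…c_i,x̃=R+1,y)`; consequently
Alice's marginal at `x̃ = i` is a mixture over `c` of the deterministic
responses `δ_{ã,c_i}`, and the observed behaviour lies in the convex hull of
behaviours deterministic on all Alice inputs `i ≤ R`.

Here `P a b c x y` is the AOE joint distribution `p(ã,b,c|x̃,y)`, with
`x̃ : Fin (R+1)` (`i.castSucc` for rounds `i ≤ R`, `Fin.last R` for `R+1`);
`hAOE` expresses `p(ã|b,c,x̃=i,y) = δ_{ã,c_i}`; `hLA1` says the joint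
distribution of `b` and the records up to round `i` does not depend on the
components of `x̃` from round `i` on; `hLA2` is `p(ã,c|x̃,y) = p(ã,c|x̃)`. -/
theorem sequential_lf_is_local_deterministic {A B Y : Type}
    [Fintype A] [DecidableEq A] [Fintype B] {R : ℕ}
    (P : A → B → (Fin R → A) → Fin (R + 1) → Y → ℝ)
    (hpos : ∀ a b c x y, 0 ≤ P a b c x y)
    (hnorm : ∀ x y, ∑ a, ∑ b, ∑ c, P a b c x y = 1)
    (hAOE : ∀ (a : A) (b : B) (c : Fin R → A) (i : Fin R) (y : Y),
      a ≠ c i → P a b c i.castSucc y = 0)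
    (hLA1 : ∀ (i : Fin R) (x x' : Fin (R + 1)), i.castSucc ≤ x → i.castSucc ≤ x' →
      ∀ (b : B) (y : Y) (g : Fin R → A),
        (∑ a, ∑ c ∈ Finset.univ.filter (fun c : Fin R → A => ∀ j ≤ i, c j = g j),
          P a b c x y)
        = ∑ a, ∑ c ∈ Finset.univ.filter (fun c : Fin R → A => ∀ j ≤ i, c j = g j),
            P a b c x' y)
    (hLA2 : ∀ (a : A) (c : Fin R → A) (x : Fin (R + 1)) (y y' : Y),
      ∑ b, P a b c x y = ∑ b, P a b c x y') :
    -- the LF decomposition of the observed behaviour for rounds `i ≤ R`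
    (∀ (i : Fin R) (a : A) (b : B) (y : Y),
      (∑ c, P a b c i.castSucc y)
        = ∑ c : Fin R → A, (if a = c i then 1 else 0)
            * ((∑ a', ∑ c' ∈ Finset.univ.filter
                  (fun c' : Fin R → A => ∀ j ≤ i, c' j = c j),
                  P a' b c' (Fin.last R) y)
                / (∑ b', ∑ a', ∑ c' ∈ Finset.univ.filter
                    (fun c' : Fin R → A => ∀ j ≤ i, c' j = c j),
                    P a' b' c' (Fin.last R) y))
            * (∑ a', ∑ b', P a' b' c (Fin.last R) y)) ∧
    -- Alice's marginal is a mixture of deterministic responses `δ_{ã,c_i}`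
    (∀ (i : Fin R) (a : A) (y : Y),
      (∑ b, ∑ c, P a b c i.castSucc y)
        = ∑ c : Fin R → A, (if a = c i then 1 else 0)
            * (∑ a', ∑ b', P a' b' c (Fin.last R) y)) ∧
    -- the observed behaviour lies in the convex hull of behaviours that are
    -- deterministic on every Alice input `i ≤ R`
    ((fun a b x y => ∑ c, P a b c x y)
      ∈ convexHull ℝ {q : A → B → Fin (R + 1) → Y → ℝ |
          ∀ (i : Fin R) (a : A) (y : Y),
            (∑ b, q a b i.castSucc y) = 0 ∨ (∑ b, q a b i.castSucc y) = 1}) := by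
  exact ⟨lf_part1 P hpos hnorm hAOE hLA1, lf_part2 P hpos hnorm hAOE hLA1,
    lf_part3 P hpos hnorm hAOE hLA1 hLA2⟩
end

section
/- In the two-setting, two-outcome scenario, the eight CH inequalities (obtained from the stated one by relabelling inputs and outputs) together with positivity and no-signalling imply membership in the local polytope: any no-signalling behaviour p on {±1}² × {1,2}² satisfying all symmetrized CH inequalities is a convex combination of the 16 deterministic product behaviours. -/
open Finset

private def tri (t c c' m n n' d : ℝ) (a b1 b2 : Bool) : ℝ :=
  if a then (if b1 then (if b2 then t else c - t) else (if b2 then c' - t else m - c - c' + t))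
  else (if b1 then (if b2 then d - t else n - c - d + t)
        else (if b2 then n' - c' - d + t else 1 - m - n - n' + c + c' + d - t))

private def dd (n n' d : ℝ) (b1 b2 : Bool) : ℝ :=
  if b1 then (if b2 then d else n - d) else (if b2 then n' - d else 1 - n - n' + d)

private def pairf (c m n : ℝ) (a b : Bool) : ℝ :=
  if a then (if b then c else m - c) else (if b then n - c else 1 - m - n + c)

private lemma tri_add (t c c' m n n' d : ℝ) (b1 b2 : Bool) :
    tri t c c' m n n' d true b1 b2 + tri t c c' m n n' d false b1 b2 = dd n n' d b1 b2 := by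
  cases b1 <;> cases b2 <;> simp [tri, dd] <;> ring

private lemma tri_mb2 (t c c' m n n' d : ℝ) (a b1 : Bool) :
    tri t c c' m n n' d a b1 true + tri t c c' m n n' d a b1 false = pairf c m n a b1 := by
  cases a <;> cases b1 <;> simp [tri, pairf] <;> ring

private lemma tri_mb1 (t c c' m n n' d : ℝ) (a b2 : Bool) :
    tri t c c' m n n' d a true b2 + tri t c c' m n n' d a false b2 = pairf c' m n' a b2 := by
  cases a <;> cases b2 <;> simp [tri, pairf] <;> ring

private lemma pair_div (x q1 q2 e : ℝ) (h : q1 + q2 = e) (h0 : e = 0 → x = 0) :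
    x * q1 / e + x * q2 / e = x := by
  rcases eq_or_ne e 0 with he | he
  · simp [he, h0 he]
  · rw [← add_div, ← mul_add, h, mul_div_assoc, div_self he, mul_one]

private lemma pair_div' (x q1 q2 e : ℝ) (h : q1 + q2 = e) (h0 : e = 0 → x = 0) :
    q1 * x / e + q2 * x / e = x := by
  rw [mul_comm q1 x, mul_comm q2 x]; exact pair_div x q1 q2 e h h0

private lemma core (c00 c01 c10 c11 m0 m1 n0 n1 : ℝ)
    (h1 : 0 ≤ c00) (h2 : 0 ≤ c01) (h3 : 0 ≤ c10) (h4 : 0 ≤ c11)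
    (h5 : c00 ≤ m0) (h6 : c01 ≤ m0) (h7 : c10 ≤ m1) (h8 : c11 ≤ m1)
    (h9 : c00 ≤ n0) (h10 : c01 ≤ n1) (h11 : c10 ≤ n0) (h12 : c11 ≤ n1)
    (h13 : m0 + n0 - 1 ≤ c00) (h14 : m0 + n1 - 1 ≤ c01)
    (h15 : m1 + n0 - 1 ≤ c10) (h16 : m1 + n1 - 1 ≤ c11)
    (u1 : c00 + c01 + c10 - c11 ≤ m0 + n0)
    (u2 : c00 + c01 - c10 + c11 ≤ m0 + n1)
    (u3 : c00 - c01 + c10 + c11 ≤ m1 + n0)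
    (u4 : - c00 + c01 + c10 + c11 ≤ m1 + n1)
    (l1 : m0 + n0 - 1 ≤ c00 + c01 + c10 - c11)
    (l2 : m0 + n1 - 1 ≤ c00 + c01 - c10 + c11)
    (l3 : m1 + n0 - 1 ≤ c00 - c01 + c10 + c11)
    (l4 : m1 + n1 - 1 ≤ - c00 + c01 + c10 + c11) :
    ∃ W : Bool → Bool → Bool → Bool → ℝ,
      (∀ a1 a2 b1 b2, 0 ≤ W a1 a2 b1 b2) ∧
      (∀ a b, W a true b true + W a false b true + W a true b false + W a false b false
          = pairf c00 m0 n0 a b) ∧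
      (∀ a b, W a true true b + W a false true b + W a true false b + W a false false b
          = pairf c01 m0 n1 a b) ∧
      (∀ a b, W true a b true + W false a b true + W true a b false + W false a b false
          = pairf c10 m1 n0 a b) ∧
      (∀ a b, W true a true b + W false a true b + W true a false b + W false a false b
          = pairf c11 m1 n1 a b) := by
  set d := max (max (max 0 (n0 + n1 - 1)) (max (c00 + c01 - m0) (c10 + c11 - m1)))
      (max (m0 + n0 + n1 - 1 - c00 - c01) (m1 + n0 + n1 - 1 - c10 - c11)) with hdd
  have hd0 : (0:ℝ) ≤ d := le_max_of_le_left (le_max_of_le_left (le_max_left _ _))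
  have hdl1 : n0 + n1 - 1 ≤ d := le_max_of_le_left (le_max_of_le_left (le_max_right _ _))
  have hdl2 : c00 + c01 - m0 ≤ d := le_max_of_le_left (le_max_of_le_right (le_max_left _ _))
  have hdl3 : c10 + c11 - m1 ≤ d := le_max_of_le_left (le_max_of_le_right (le_max_right _ _))
  have hdl4 : m0 + n0 + n1 - 1 - c00 - c01 ≤ d := le_max_of_le_right (le_max_left _ _)
  have hdl5 : m1 + n0 + n1 - 1 - c10 - c11 ≤ d := le_max_of_le_right (le_max_right _ _)
  have hdu1 : d ≤ n0 := by
    rw [hdd]; refine max_le (max_le (max_le ?_ ?_) (max_le ?_ ?_)) (max_le ?_ ?_) <;> linarith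
  have hdu2 : d ≤ n1 := by
    rw [hdd]; refine max_le (max_le (max_le ?_ ?_) (max_le ?_ ?_)) (max_le ?_ ?_) <;> linarith
  have hdu3 : d ≤ c00 - c01 + n1 := by
    rw [hdd]; refine max_le (max_le (max_le ?_ ?_) (max_le ?_ ?_)) (max_le ?_ ?_) <;> linarith
  have hdu4 : d ≤ c01 - c00 + n0 := by
    rw [hdd]; refine max_le (max_le (max_le ?_ ?_) (max_le ?_ ?_)) (max_le ?_ ?_) <;> linarith
  have hdu5 : d ≤ c10 - c11 + n1 := by
    rw [hdd]; refine max_le (max_le (max_le ?_ ?_) (max_le ?_ ?_)) (max_le ?_ ?_) <;> linarith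
  have hdu6 : d ≤ c11 - c10 + n0 := by
    rw [hdd]; refine max_le (max_le (max_le ?_ ?_) (max_le ?_ ?_)) (max_le ?_ ?_) <;> linarith
  set t1 := max (max 0 (c00 + c01 - m0)) (max (c00 + d - n0) (c01 + d - n1)) with ht1d
  set t2 := max (max 0 (c10 + c11 - m1)) (max (c10 + d - n0) (c11 + d - n1)) with ht2d
  have ht1a : (0:ℝ) ≤ t1 := le_max_of_le_left (le_max_left _ _)
  have ht1b : c00 + c01 - m0 ≤ t1 := le_max_of_le_left (le_max_right _ _)
  have ht1c : c00 + d - n0 ≤ t1 := le_max_of_le_right (le_max_left _ _)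
  have ht1e : c01 + d - n1 ≤ t1 := le_max_of_le_right (le_max_right _ _)
  have ht2a : (0:ℝ) ≤ t2 := le_max_of_le_left (le_max_left _ _)
  have ht2b : c10 + c11 - m1 ≤ t2 := le_max_of_le_left (le_max_right _ _)
  have ht2c : c10 + d - n0 ≤ t2 := le_max_of_le_right (le_max_left _ _)
  have ht2e : c11 + d - n1 ≤ t2 := le_max_of_le_right (le_max_right _ _)
  have ht1u1 : t1 ≤ c00 := by
    rw [ht1d]; refine max_le (max_le ?_ ?_) (max_le ?_ ?_) <;> linarith
  have ht1u2 : t1 ≤ c01 := by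
    rw [ht1d]; refine max_le (max_le ?_ ?_) (max_le ?_ ?_) <;> linarith
  have ht1u3 : t1 ≤ d := by
    rw [ht1d]; refine max_le (max_le ?_ ?_) (max_le ?_ ?_) <;> linarith
  have ht1u4 : t1 ≤ 1 - m0 - n0 - n1 + c00 + c01 + d := by
    rw [ht1d]; refine max_le (max_le ?_ ?_) (max_le ?_ ?_) <;> linarith
  have ht2u1 : t2 ≤ c10 := by
    rw [ht2d]; refine max_le (max_le ?_ ?_) (max_le ?_ ?_) <;> linarith
  have ht2u2 : t2 ≤ c11 := by
    rw [ht2d]; refine max_le (max_le ?_ ?_) (max_le ?_ ?_) <;> linarith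
  have ht2u3 : t2 ≤ d := by
    rw [ht2d]; refine max_le (max_le ?_ ?_) (max_le ?_ ?_) <;> linarith
  have ht2u4 : t2 ≤ 1 - m1 - n0 - n1 + c10 + c11 + d := by
    rw [ht2d]; refine max_le (max_le ?_ ?_) (max_le ?_ ?_) <;> linarith
  have hT1 : ∀ a b1 b2, 0 ≤ tri t1 c00 c01 m0 n0 n1 d a b1 b2 := by
    intro a b1 b2; cases a <;> cases b1 <;> cases b2 <;> simp [tri] <;> linarith
  have hT2 : ∀ a b1 b2, 0 ≤ tri t2 c10 c11 m1 n0 n1 d a b1 b2 := by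
    intro a b1 b2; cases a <;> cases b1 <;> cases b2 <;> simp [tri] <;> linarith
  have hDD : ∀ b1 b2, 0 ≤ dd n0 n1 d b1 b2 := by
    intro b1 b2; cases b1 <;> cases b2 <;> simp [dd] <;> linarith
  have hz1 : ∀ a b1 b2, dd n0 n1 d b1 b2 = 0 → tri t1 c00 c01 m0 n0 n1 d a b1 b2 = 0 := by
    intro a b1 b2 h
    have hs := tri_add t1 c00 c01 m0 n0 n1 d b1 b2
    have g1 := hT1 true b1 b2
    have g2 := hT1 false b1 b2
    cases a <;> linarith
  have hz2 : ∀ a b1 b2, dd n0 n1 d b1 b2 = 0 → tri t2 c10 c11 m1 n0 n1 d a b1 b2 = 0 := by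
    intro a b1 b2 h
    have hs := tri_add t2 c10 c11 m1 n0 n1 d b1 b2
    have g1 := hT2 true b1 b2
    have g2 := hT2 false b1 b2
    cases a <;> linarith
  refine ⟨fun a1 a2 b1 b2 =>
      tri t1 c00 c01 m0 n0 n1 d a1 b1 b2 * tri t2 c10 c11 m1 n0 n1 d a2 b1 b2 / dd n0 n1 d b1 b2,
      ?_, ?_, ?_, ?_, ?_⟩
  · intro a1 a2 b1 b2
    exact div_nonneg (mul_nonneg (hT1 _ _ _) (hT2 _ _ _)) (hDD _ _)
  · intro a b
    have e1 := pair_div (tri t1 c00 c01 m0 n0 n1 d a b true)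
      (tri t2 c10 c11 m1 n0 n1 d true b true) (tri t2 c10 c11 m1 n0 n1 d false b true)
      (dd n0 n1 d b true) (tri_add t2 c10 c11 m1 n0 n1 d b true) (hz1 a b true)
    have e2 := pair_div (tri t1 c00 c01 m0 n0 n1 d a b false)
      (tri t2 c10 c11 m1 n0 n1 d true b false) (tri t2 c10 c11 m1 n0 n1 d false b false)
      (dd n0 n1 d b false) (tri_add t2 c10 c11 m1 n0 n1 d b false) (hz1 a b false)
    have e3 := tri_mb2 t1 c00 c01 m0 n0 n1 d a b
    dsimp only
    linarith
  · intro a b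
    have e1 := pair_div (tri t1 c00 c01 m0 n0 n1 d a true b)
      (tri t2 c10 c11 m1 n0 n1 d true true b) (tri t2 c10 c11 m1 n0 n1 d false true b)
      (dd n0 n1 d true b) (tri_add t2 c10 c11 m1 n0 n1 d true b) (hz1 a true b)
    have e2 := pair_div (tri t1 c00 c01 m0 n0 n1 d a false b)
      (tri t2 c10 c11 m1 n0 n1 d true false b) (tri t2 c10 c11 m1 n0 n1 d false false b)
      (dd n0 n1 d false b) (tri_add t2 c10 c11 m1 n0 n1 d false b) (hz1 a false b)
    have e3 := tri_mb1 t1 c00 c01 m0 n0 n1 d a b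
    dsimp only
    linarith
  · intro a b
    have e1 := pair_div' (tri t2 c10 c11 m1 n0 n1 d a b true)
      (tri t1 c00 c01 m0 n0 n1 d true b true) (tri t1 c00 c01 m0 n0 n1 d false b true)
      (dd n0 n1 d b true) (tri_add t1 c00 c01 m0 n0 n1 d b true) (hz2 a b true)
    have e2 := pair_div' (tri t2 c10 c11 m1 n0 n1 d a b false)
      (tri t1 c00 c01 m0 n0 n1 d true b false) (tri t1 c00 c01 m0 n0 n1 d false b false)
      (dd n0 n1 d b false) (tri_add t1 c00 c01 m0 n0 n1 d b false) (hz2 a b false)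
    have e3 := tri_mb2 t2 c10 c11 m1 n0 n1 d a b
    dsimp only
    linarith
  · intro a b
    have e1 := pair_div' (tri t2 c10 c11 m1 n0 n1 d a true b)
      (tri t1 c00 c01 m0 n0 n1 d true true b) (tri t1 c00 c01 m0 n0 n1 d false true b)
      (dd n0 n1 d true b) (tri_add t1 c00 c01 m0 n0 n1 d true b) (hz2 a true b)
    have e2 := pair_div' (tri t2 c10 c11 m1 n0 n1 d a false b)
      (tri t1 c00 c01 m0 n0 n1 d true false b) (tri t1 c00 c01 m0 n0 n1 d false false b)
      (dd n0 n1 d false b) (tri_add t1 c00 c01 m0 n0 n1 d false b) (hz2 a false b)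
    have e3 := tri_mb1 t2 c10 c11 m1 n0 n1 d a b
    dsimp only
    linarith

/-- Fine's theorem for the CH scenario: in the two-setting,
two-outcome bipartite scenario (outcomes `Bool`, with `true` standing for `+1`,
inputs `Fin 2`), any nonnegative, normalized, no-signalling behaviour
satisfying all symmetrized CH inequalities (obtained by relabelling the inputs
on each side and flipping the outcomes on each side) is a convex combination of
the 16 deterministic product behaviours. -/
theorem fine_theorem_ch
    (p : Bool → Bool → Fin 2 → Fin 2 → ℝ)
    (hpos : ∀ a b x y, 0 ≤ p a b x y)
    (hnorm : ∀ x y, ∑ a, ∑ b, p a b x y = 1)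
    (hnsA : ∀ a x y y', ∑ b, p a b x y = ∑ b, p a b x y')
    (hnsB : ∀ b x x' y, ∑ a, p a b x y = ∑ a, p a b x' y)
    (hCH : ∀ (x x' y y' : Fin 2), x ≠ x' → y ≠ y' → ∀ sa sb : Bool,
      p (xor true sa) (xor true sb) x y + p (xor true sa) (xor true sb) x y'
        + p (xor true sa) (xor true sb) x' y - p (xor true sa) (xor true sb) x' y'
        - (∑ b, p (xor true sa) b x y) - (∑ a, p a (xor true sb) x y) ≤ 0) :
    ∃ w : (Fin 2 → Bool) × (Fin 2 → Bool) → ℝ,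
      (∀ fg, 0 ≤ w fg) ∧ (∑ fg, w fg = 1) ∧
      (∀ a b x y, p a b x y = ∑ fg : (Fin 2 → Bool) × (Fin 2 → Bool),
        w fg * (if a = fg.1 x then 1 else 0) * (if b = fg.2 y then 1 else 0)) := by
  have norm' : ∀ x y, p true true x y + p true false x y + p false true x y
      + p false false x y = 1 := by
    intro x y; have h := hnorm x y; simp [Fintype.sum_bool] at h; linarith
  have nsA' : ∀ x y, p true true x y + p true false x y
      = p true true x 0 + p true false x 0 := by
    intro x y; have h := hnsA true x y 0; simpa [Fintype.sum_bool] using h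
  have nsB' : ∀ x y, p true true x y + p false true x y
      = p true true 0 y + p false true 0 y := by
    intro x y; have h := hnsB true x 0 y; simpa [Fintype.sum_bool] using h
  have u1 : p true true 0 0 + p true true 0 1 + p true true 1 0 - p true true 1 1
      ≤ (p true true 0 0 + p true false 0 0) + (p true true 0 0 + p false true 0 0) := by
    have h := hCH 0 1 0 1 (by decide) (by decide) false false
    simp [Fintype.sum_bool] at h; linarith
  have u2 : p true true 0 0 + p true true 0 1 - p true true 1 0 + p true true 1 1
      ≤ (p true true 0 0 + p true false 0 0) + (p true true 0 1 + p false true 0 1) := by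
    have h := hCH 0 1 1 0 (by decide) (by decide) false false
    simp [Fintype.sum_bool] at h; linarith [nsA' 0 1]
  have u3 : p true true 0 0 - p true true 0 1 + p true true 1 0 + p true true 1 1
      ≤ (p true true 1 0 + p true false 1 0) + (p true true 0 0 + p false true 0 0) := by
    have h := hCH 1 0 0 1 (by decide) (by decide) false false
    simp [Fintype.sum_bool] at h; linarith [nsB' 1 0]
  have u4 : - p true true 0 0 + p true true 0 1 + p true true 1 0 + p true true 1 1
      ≤ (p true true 1 0 + p true false 1 0) + (p true true 0 1 + p false true 0 1) := by
    have h := hCH 1 0 1 0 (by decide) (by decide) false false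
    simp [Fintype.sum_bool] at h; linarith [nsA' 1 1, nsB' 1 1]
  have l1 : (p true true 0 0 + p true false 0 0) + (p true true 0 0 + p false true 0 0) - 1
      ≤ p true true 0 0 + p true true 0 1 + p true true 1 0 - p true true 1 1 := by
    have h := hCH 0 1 0 1 (by decide) (by decide) true false
    simp [Fintype.sum_bool] at h; linarith [norm' 0 0, nsB' 1 0, nsB' 1 1]
  have l2 : (p true true 0 0 + p true false 0 0) + (p true true 0 1 + p false true 0 1) - 1
      ≤ p true true 0 0 + p true true 0 1 - p true true 1 0 + p true true 1 1 := by
    have h := hCH 0 1 1 0 (by decide) (by decide) true false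
    simp [Fintype.sum_bool] at h; linarith [norm' 0 1, nsA' 0 1, nsB' 1 0, nsB' 1 1]
  have l3 : (p true true 1 0 + p true false 1 0) + (p true true 0 0 + p false true 0 0) - 1
      ≤ p true true 0 0 - p true true 0 1 + p true true 1 0 + p true true 1 1 := by
    have h := hCH 1 0 0 1 (by decide) (by decide) true false
    simp [Fintype.sum_bool] at h; linarith [norm' 1 0, nsB' 1 0, nsB' 1 1]
  have l4 : (p true true 1 0 + p true false 1 0) + (p true true 0 1 + p false true 0 1) - 1
      ≤ - p true true 0 0 + p true true 0 1 + p true true 1 0 + p true true 1 1 := by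
    have h := hCH 1 0 1 0 (by decide) (by decide) true false
    simp [Fintype.sum_bool] at h; linarith [norm' 1 1, nsA' 1 1, nsB' 1 0, nsB' 1 1]
  obtain ⟨W, hW0, hM00, hM01, hM10, hM11⟩ :=
    core (p true true 0 0) (p true true 0 1) (p true true 1 0) (p true true 1 1)
      (p true true 0 0 + p true false 0 0) (p true true 1 0 + p true false 1 0)
      (p true true 0 0 + p false true 0 0) (p true true 0 1 + p false true 0 1)
      (hpos _ _ _ _) (hpos _ _ _ _) (hpos _ _ _ _) (hpos _ _ _ _)
      (by linarith [hpos true false 0 0])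
      (by linarith [nsA' 0 1, hpos true false 0 1])
      (by linarith [hpos true false 1 0])
      (by linarith [nsA' 1 1, hpos true false 1 1])
      (by linarith [hpos false true 0 0])
      (by linarith [hpos false true 0 1])
      (by linarith [nsB' 1 0, hpos false true 1 0])
      (by linarith [nsB' 1 1, hpos false true 1 1])
      (by linarith [norm' 0 0, hpos false false 0 0])
      (by linarith [nsA' 0 1, norm' 0 1, hpos false false 0 1])
      (by linarith [nsB' 1 0, norm' 1 0, hpos false false 1 0])
      (by linarith [nsA' 1 1, nsB' 1 1, norm' 1 1, hpos false false 1 1])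
      (by linarith) (by linarith) (by linarith) (by linarith)
      (by linarith) (by linarith) (by linarith) (by linarith)
  have E00 : ∀ a b, W a true b true + W a false b true + W a true b false + W a false b false
      = p a b 0 0 := by
    intro a b; rw [hM00 a b]
    cases a <;> cases b <;> simp [pairf] <;> linarith [norm' 0 0]
  have E01 : ∀ a b, W a true true b + W a false true b + W a true false b + W a false false b
      = p a b 0 1 := by
    intro a b; rw [hM01 a b]
    cases a <;> cases b <;> simp [pairf] <;> linarith [norm' 0 1, nsA' 0 1]
  have E10 : ∀ a b, W true a b true + W false a b true + W true a b false + W false a b false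
      = p a b 1 0 := by
    intro a b; rw [hM10 a b]
    cases a <;> cases b <;> simp [pairf] <;> linarith [norm' 1 0, nsB' 1 0]
  have E11 : ∀ a b, W true a true b + W false a true b + W true a false b + W false a false b
      = p a b 1 1 := by
    intro a b; rw [hM11 a b]
    cases a <;> cases b <;> simp [pairf] <;> linarith [norm' 1 1, nsA' 1 1, nsB' 1 1]
  have key : ∀ F : ((Fin 2 → Bool) × (Fin 2 → Bool)) → ℝ,
      ∑ fg, F fg = ∑ q : (Bool × Bool) × (Bool × Bool), F (![q.1.1, q.1.2], ![q.2.1, q.2.2]) := by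
    intro F
    apply Fintype.sum_equiv ((piFinTwoEquiv fun _ => Bool).prodCongr (piFinTwoEquiv fun _ => Bool))
    intro fg
    have hf : ∀ f : Fin 2 → Bool, ![f 0, f 1] = f := by
      intro f; funext i; fin_cases i <;> rfl
    simp [piFinTwoEquiv, hf]
  refine ⟨fun fg => W (fg.1 0) (fg.1 1) (fg.2 0) (fg.2 1), fun fg => hW0 _ _ _ _, ?_, ?_⟩
  · rw [key]
    simp only [Fintype.sum_prod_type, Fintype.sum_bool, Matrix.cons_val_zero,
      Matrix.cons_val_one, Matrix.head_cons]
    linarith [E00 true true, E00 true false, E00 false true, E00 false false, norm' 0 0]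
  · intro a b x y
    rw [key]
    simp only [Fintype.sum_prod_type, Fintype.sum_bool, Matrix.cons_val_zero,
      Matrix.cons_val_one, Matrix.head_cons]
    fin_cases x <;> fin_cases y <;> cases a <;> cases b <;>
      simp only [Fin.mk_zero, Fin.mk_one, Matrix.cons_val_zero, Matrix.cons_val_one,
        Matrix.head_cons] <;>
      norm_num <;>
      linarith [E00 true true, E00 true false, E00 false true, E00 false false,
        E01 true true, E01 true false, E01 false true, E01 false false,
        E10 true true, E10 true false, E10 false true, E10 false false,
        E11 true true, E11 true false, E11 false true, E11 false false]
end
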